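/- arXiv:1908.02694 — 2 statements merged into one kernel-verified Lean document; each statement's English description precedes it below -/
import Mathlib

section
/- The expected integrated overall error, combining KL truncation and the active-subspace projection of the retained KL modes, satisfies E[ Ē ] ≤ μ(X)^{1/2} · [ ( Σ_{k=N+1}^∞ λ_k )^{1/2} + Σ_{k=1}^N δ_k ], where Ē(ξ) = ∫_X | f(x,ξ) − f̂_N(x,ξ) | dμ(x), f̂_N(x,ξ) = Σ_{k=1}^N g_k(ξ) φ_k(x), and the expectation is taken over ξ ∼ π. -/
open MeasureTheory
open scoped ENNReal

/-- Cauchy–Schwarz for `lintegral` against the constant `1`. -/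
private lemma lint_CS {α : Type*} [MeasurableSpace α] (ν : Measure α) (h : α → ℝ≥0∞)
    (hh : AEMeasurable h ν) :
    ∫⁻ a, h a ∂ν ≤ (∫⁻ a, h a ^ (2:ℝ) ∂ν) ^ (1/2:ℝ) * (ν Set.univ) ^ (1/2:ℝ) := by
  have hconj : Real.HolderConjugate 2 2 := Real.HolderConjugate.two_two
  have := ENNReal.lintegral_mul_le_Lp_mul_Lq ν hconj hh
    (aemeasurable_const (b := (1:ℝ≥0∞)))
  simpa using this

/-- `ofReal` of a real integral of a nonnegative function is at most the `lintegral`. -/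
private lemma ofReal_int_le {α : Type*} [MeasurableSpace α] (ν : Measure α) (u : α → ℝ)
    (hu : 0 ≤ᵐ[ν] u) :
    ENNReal.ofReal (∫ a, u a ∂ν) ≤ ∫⁻ a, ENNReal.ofReal (u a) ∂ν := by
  by_cases h : Integrable u ν
  · exact le_of_eq (ofReal_integral_eq_lintegral_ofReal h hu)
  · rw [integral_undef h]; simp

private lemma sq_ofReal_abs (a : ℝ) :
    ENNReal.ofReal |a| ^ (2:ℝ) = ENNReal.ofReal (a ^ 2) := by
  rw [ENNReal.ofReal_rpow_of_nonneg (abs_nonneg a) (by norm_num)]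
  congr 1
  rw [show ((2:ℝ)) = ((2:ℕ):ℝ) by norm_num, Real.rpow_natCast, sq_abs]

private lemma rpow_half_sq (x : ℝ≥0∞) : (x ^ (1/2:ℝ)) ^ (2:ℝ) = x := by
  rw [← ENNReal.rpow_mul]; norm_num

/-- the expected integrated overall error (KL truncation plus active-subspace
projection of the retained modes) satisfies
`E[Ē] ≤ μ(X)^{1/2} [(Σ_{k=N+1}^∞ λ_k)^{1/2} + Σ_{k=1}^N δ_k]`. -/
theorem stmt_7
    {X : Type*} [MeasurableSpace X] (μ : Measure X) [IsFiniteMeasure μ]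
    {Np : ℕ} (π : Measure (Fin Np → ℝ)) [IsProbabilityMeasure π]
    -- orthonormal family in `L²(X, μ)`:
    (φ : ℕ → X → ℝ)
    (hφ_L2 : ∀ k, MemLp (φ k) 2 μ)
    (hφ_ortho : ∀ k l, ∫ x, φ k x * φ l x ∂μ = if k = l then 1 else 0)
    -- `f` jointly measurable, square-integrable w.r.t. `μ ⊗ π`, mean zero:
    (f : X → (Fin Np → ℝ) → ℝ)
    (hf_meas : Measurable (Function.uncurry f))
    (hf_L2 : MemLp (Function.uncurry f) 2 (μ.prod π))
    (hf_mean : ∀ᵐ x ∂μ, ∫ ξ, f x ξ ∂π = 0)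
    -- KL modes `F_k(ξ) = ∫_X f(x,ξ) φ_k(x) dμ(x)`:
    (F : ℕ → (Fin Np → ℝ) → ℝ)
    (hF : ∀ k ξ, F k ξ = ∫ x, f x ξ * φ k x ∂μ)
    (N : ℕ)
    -- Parseval: the expansion of `f(·,ξ)` converges in `L²(X,μ)` for a.e. `ξ`,
    -- so the truncation error equals the tail sum of squared coefficients:
    (hsq_summable : ∀ᵐ ξ ∂π, Summable fun k : ℕ => (F (N + k) ξ) ^ 2)
    (hParseval : ∀ᵐ ξ ∂π,
      ∫ x, (f x ξ - ∑ k ∈ Finset.range N, F k ξ * φ k x) ^ 2 ∂μ =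
        ∑' k : ℕ, (F (N + k) ξ) ^ 2)
    -- eigenvalues `λ_k = ∫ F_k² dπ`, with `Σ λ_k < ∞`:
    (lam : ℕ → ℝ) (hlam : ∀ k, lam k = ∫ ξ, (F k ξ) ^ 2 ∂π)
    (hlam_summable : Summable lam)
    -- active-subspace approximations `g_k` of the retained modes:
    (g : ℕ → (Fin Np → ℝ) → ℝ)
    (hg_L2 : ∀ k, MemLp (g k) 2 π)
    (δ : ℕ → ℝ) (hδ : ∀ k, 0 ≤ δ k)
    (hbound : ∀ k < N, ∫ ξ, (F k ξ - g k ξ) ^ 2 ∂π ≤ (δ k) ^ 2) :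
    ∫ ξ, (∫ x, |f x ξ - ∑ k ∈ Finset.range N, g k ξ * φ k x| ∂μ) ∂π ≤
      Real.sqrt (μ Set.univ).toReal *
        (Real.sqrt (∑' k : ℕ, lam (N + k)) + ∑ k ∈ Finset.range N, δ k) := by
  classical
  -- measurable representatives of φ and g
  set φ' : ℕ → X → ℝ := fun k => (hφ_L2 k).1.mk (φ k) with hφ'def
  have hφ'meas : ∀ k, Measurable (φ' k) :=
    fun k => (hφ_L2 k).1.stronglyMeasurable_mk.measurable
  have hφ'ae : ∀ k, φ k =ᵐ[μ] φ' k := fun k => (hφ_L2 k).1.ae_eq_mk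
  have hφ'L2 : ∀ k, MemLp (φ' k) 2 μ := fun k => (hφ_L2 k).ae_eq (hφ'ae k)
  set g' : ℕ → (Fin Np → ℝ) → ℝ := fun k => (hg_L2 k).1.mk (g k) with hg'def
  have hg'meas : ∀ k, Measurable (g' k) :=
    fun k => (hg_L2 k).1.stronglyMeasurable_mk.measurable
  have hg'ae : ∀ k, g k =ᵐ[π] g' k := fun k => (hg_L2 k).1.ae_eq_mk
  -- section measurability of f
  have hfx : ∀ ξ, Measurable fun x => f x ξ :=
    fun ξ => hf_meas.comp (measurable_id.prodMk measurable_const)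
  have hfswap : Measurable fun q : (Fin Np → ℝ) × X => f q.2 q.1 :=
    hf_meas.comp (measurable_snd.prodMk measurable_fst)
  -- normalization of φ'
  have hφ'sq_int : ∀ k, Integrable (fun x => φ' k x ^ 2) μ :=
    fun k => (hφ'L2 k).integrable_sq
  have hφ'norm : ∀ k, ∫ x, φ' k x ^ 2 ∂μ = 1 := by
    intro k
    have h1 : ∫ x, φ' k x ^ 2 ∂μ = ∫ x, φ k x * φ k x ∂μ :=
      integral_congr_ae ((hφ'ae k).mono fun x hx => by simp only [← hx]; ring)
    rw [h1, hφ_ortho k k]; simp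
  have hφ'lint : ∀ k, ∫⁻ x, ENNReal.ofReal (φ' k x ^ 2) ∂μ = 1 := by
    intro k
    rw [← ofReal_integral_eq_lintegral_ofReal (hφ'sq_int k)
      (Filter.Eventually.of_forall fun x => sq_nonneg _), hφ'norm k]
    simp
  set M : ℝ≥0∞ := (μ Set.univ) ^ (1/2:ℝ) with hM
  have hMne : M ≠ ∞ :=
    ENNReal.rpow_ne_top_of_nonneg (by norm_num) (measure_ne_top μ _)
  have hφ'abs_lint : ∀ k, ∫⁻ x, ENNReal.ofReal |φ' k x| ∂μ ≤ M := by
    intro k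
    have h1 := lint_CS μ (fun x => ENNReal.ofReal |φ' k x|)
      (ENNReal.measurable_ofReal.comp (hφ'meas k).abs).aemeasurable
    calc ∫⁻ x, ENNReal.ofReal |φ' k x| ∂μ
        ≤ (∫⁻ x, ENNReal.ofReal |φ' k x| ^ (2:ℝ) ∂μ) ^ (1/2:ℝ) * M := h1
      _ = M := by
          simp_rw [sq_ofReal_abs]
          rw [hφ'lint k]
          simp
  -- measurability of F
  have hFeq : ∀ k, F k = fun ξ => ∫ x, f x ξ * φ' k x ∂μ := by
    intro k; funext ξ
    rw [hF k ξ]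
    exact integral_congr_ae ((hφ'ae k).mono fun x hx => by simp only [hx])
  have hFmeas : ∀ k, Measurable (F k) := by
    intro k
    rw [hFeq k]
    exact (Measurable.stronglyMeasurable
      (hfswap.mul ((hφ'meas k).comp measurable_snd))).integral_prod_right'.measurable
  -- square of f is integrable, finiteness of the iterated lintegral
  have h2int : Integrable (fun p : X × (Fin Np → ℝ) => Function.uncurry f p ^ 2) (μ.prod π) :=
    hf_L2.integrable_sq
  have hsec : ∀ᵐ ξ ∂π, Integrable (fun x => f x ξ ^ 2) μ := h2int.prod_left_ae
  have hfin : ∫⁻ ξ, ∫⁻ x, ENNReal.ofReal (f x ξ ^ 2) ∂μ ∂π < ∞ := by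
    have hm : Measurable fun p : X × (Fin Np → ℝ) => ENNReal.ofReal (f p.1 p.2 ^ 2) :=
      ENNReal.measurable_ofReal.comp (hf_meas.pow_const 2)
    have h2 := lintegral_prod_symm (μ := μ) (ν := π)
      (fun p : X × (Fin Np → ℝ) => ENNReal.ofReal (f p.1 p.2 ^ 2)) hm.aemeasurable
    have h1 : ∫⁻ p : X × (Fin Np → ℝ), ENNReal.ofReal (f p.1 p.2 ^ 2) ∂(μ.prod π) < ⊤ := by
      simpa [Function.uncurry] using (hasFiniteIntegral_iff_ofReal
        (Filter.Eventually.of_forall fun p => sq_nonneg _)).1 h2int.2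
    rw [h2] at h1
    exact h1
  -- pointwise bound on the modes
  have hFbd : ∀ j ξ, ENNReal.ofReal (F j ξ ^ 2) ≤ ∫⁻ x, ENNReal.ofReal (f x ξ ^ 2) ∂μ := by
    intro j ξ
    have habs : |F j ξ| ≤ ∫ x, |f x ξ| * |φ' j x| ∂μ := by
      rw [hFeq j]
      calc |∫ x, f x ξ * φ' j x ∂μ| = ‖∫ x, f x ξ * φ' j x ∂μ‖ := (Real.norm_eq_abs _).symm
        _ ≤ ∫ x, ‖f x ξ * φ' j x‖ ∂μ := norm_integral_le_integral_norm _
        _ = ∫ x, |f x ξ| * |φ' j x| ∂μ := by simp only [Real.norm_eq_abs, abs_mul]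
    have hconj : Real.HolderConjugate 2 2 := Real.HolderConjugate.two_two
    have hstep : ENNReal.ofReal |F j ξ| ≤ (∫⁻ x, ENNReal.ofReal (f x ξ ^ 2) ∂μ) ^ (1/2:ℝ) := by
      calc ENNReal.ofReal |F j ξ| ≤ ENNReal.ofReal (∫ x, |f x ξ| * |φ' j x| ∂μ) :=
            ENNReal.ofReal_le_ofReal habs
        _ ≤ ∫⁻ x, ENNReal.ofReal (|f x ξ| * |φ' j x|) ∂μ :=
            ofReal_int_le μ _ (Filter.Eventually.of_forall fun x =>
              mul_nonneg (abs_nonneg _) (abs_nonneg _))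
        _ = ∫⁻ x, ENNReal.ofReal |f x ξ| * ENNReal.ofReal |φ' j x| ∂μ := by
            simp_rw [ENNReal.ofReal_mul (abs_nonneg _)]
        _ ≤ (∫⁻ x, ENNReal.ofReal |f x ξ| ^ (2:ℝ) ∂μ) ^ (1/2:ℝ) *
            (∫⁻ x, ENNReal.ofReal |φ' j x| ^ (2:ℝ) ∂μ) ^ (1/2:ℝ) :=
            ENNReal.lintegral_mul_le_Lp_mul_Lq μ hconj
              (ENNReal.measurable_ofReal.comp (hfx ξ).abs).aemeasurable
              (ENNReal.measurable_ofReal.comp (hφ'meas j).abs).aemeasurable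
        _ = (∫⁻ x, ENNReal.ofReal (f x ξ ^ 2) ∂μ) ^ (1/2:ℝ) := by
            simp_rw [sq_ofReal_abs]
            rw [hφ'lint j]
            simp
    calc ENNReal.ofReal (F j ξ ^ 2) = ENNReal.ofReal |F j ξ| ^ (2:ℝ) := (sq_ofReal_abs _).symm
      _ ≤ ((∫⁻ x, ENNReal.ofReal (f x ξ ^ 2) ∂μ) ^ (1/2:ℝ)) ^ (2:ℝ) :=
          ENNReal.rpow_le_rpow hstep (by norm_num)
      _ = ∫⁻ x, ENNReal.ofReal (f x ξ ^ 2) ∂μ := rpow_half_sq _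
  -- the modes are square integrable over π
  have hFsq_int : ∀ j, Integrable (fun ξ => F j ξ ^ 2) π := by
    intro j
    refine ⟨((hFmeas j).pow_const 2).aestronglyMeasurable, ?_⟩
    rw [hasFiniteIntegral_iff_ofReal (Filter.Eventually.of_forall fun ξ => sq_nonneg _)]
    exact lt_of_le_of_lt (lintegral_mono fun ξ => hFbd j ξ) hfin
  have hFlam : ∀ j, ∫⁻ ξ, ENNReal.ofReal (F j ξ ^ 2) ∂π = ENNReal.ofReal (lam j) := by
    intro j
    rw [← ofReal_integral_eq_lintegral_ofReal (hFsq_int j)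
      (Filter.Eventually.of_forall fun ξ => sq_nonneg _), hlam j]
  have hlam_nonneg : ∀ j, 0 ≤ lam j := by
    intro j; rw [hlam j]; exact integral_nonneg fun ξ => sq_nonneg _
  -- tail sum
  set S : ℝ := ∑' k, lam (N + k) with hSdef
  have hS_summable : Summable fun k => lam (N + k) :=
    hlam_summable.comp_injective fun a b h => by omega
  have hS : 0 ≤ S := tsum_nonneg fun k => hlam_nonneg _
  set U : (Fin Np → ℝ) → ℝ≥0∞ := fun ξ => ∑' k, ENNReal.ofReal (F (N + k) ξ ^ 2) with hUdef
  have hUmeas : Measurable U :=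
    Measurable.ennreal_tsum fun k => ENNReal.measurable_ofReal.comp ((hFmeas (N + k)).pow_const 2)
  have hUint : ∫⁻ ξ, U ξ ∂π = ENNReal.ofReal S := by
    rw [hUdef]
    simp only
    rw [lintegral_tsum fun k : ℕ =>
      (((hFmeas (N + k)).pow_const 2).ennreal_ofReal).aemeasurable]
    rw [hSdef, ENNReal.ofReal_tsum_of_nonneg (fun k => hlam_nonneg _) hS_summable]
    exact tsum_congr fun k => hFlam (N + k)
  -- the truncated-error lintegral
  set A : (Fin Np → ℝ) → ℝ≥0∞ := fun ξ =>
    ∫⁻ x, ENNReal.ofReal |f x ξ - ∑ k ∈ Finset.range N, g k ξ * φ' k x| ∂μ with hAdef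
  -- a.e. agreement of φ and φ' on the finite range
  have hsum_ae : ∀ᵐ x ∂μ, ∀ k ∈ Finset.range N, φ k x = φ' k x :=
    Filter.eventually_all_finset (Finset.range N) |>.2 fun k _ => hφ'ae k
  -- key per-ξ bound
  have key : ∀ᵐ ξ ∂π, A ξ ≤
      (U ξ ^ (1/2:ℝ) + ∑ k ∈ Finset.range N, ENNReal.ofReal |F k ξ - g k ξ|) * M := by
    filter_upwards [hsec, hParseval, hsq_summable] with ξ h1 h2 h3
    have hfmem : MemLp (fun x => f x ξ) 2 μ :=
      (memLp_two_iff_integrable_sq (hfx ξ).aestronglyMeasurable).2 h1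
    set e : X → ℝ := fun x => f x ξ - ∑ k ∈ Finset.range N, F k ξ * φ' k x with hedef
    have hemeas : Measurable e :=
      (hfx ξ).sub (Finset.measurable_sum _ fun k _ => measurable_const.mul (hφ'meas k))
    have hemem : MemLp e 2 μ := by
      have hsum : MemLp (fun x => ∑ k ∈ Finset.range N, F k ξ * φ' k x) 2 μ :=
        memLp_finset_sum _ fun k _ => (hφ'L2 k).const_mul (F k ξ)
      exact hfmem.sub hsum
    have hin2 : Integrable (fun x => e x ^ 2) μ := hemem.integrable_sq
    have hlint_e2 : ∫⁻ x, ENNReal.ofReal (e x ^ 2) ∂μ = U ξ := by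
      rw [← ofReal_integral_eq_lintegral_ofReal hin2
        (Filter.Eventually.of_forall fun x => sq_nonneg _)]
      have h4 : ∫ x, e x ^ 2 ∂μ = ∑' k : ℕ, F (N + k) ξ ^ 2 := by
        rw [← h2]
        refine integral_congr_ae (hsum_ae.mono fun x hx => ?_)
        simp only [hedef]
        congr 2
        exact (Finset.sum_congr rfl fun k hk => by rw [hx k hk]).symm
      rw [h4, ENNReal.ofReal_tsum_of_nonneg (fun k => sq_nonneg _) h3]
    have hpt : ∀ x, ENNReal.ofReal |f x ξ - ∑ k ∈ Finset.range N, g k ξ * φ' k x| ≤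
        ENNReal.ofReal |e x| + ∑ k ∈ Finset.range N,
          ENNReal.ofReal |F k ξ - g k ξ| * ENNReal.ofReal |φ' k x| := by
      intro x
      have h4 : f x ξ - ∑ k ∈ Finset.range N, g k ξ * φ' k x =
          e x + ∑ k ∈ Finset.range N, (F k ξ - g k ξ) * φ' k x := by
        simp only [hedef, sub_mul, Finset.sum_sub_distrib]
        ring
      rw [h4]
      calc ENNReal.ofReal |e x + ∑ k ∈ Finset.range N, (F k ξ - g k ξ) * φ' k x|
          ≤ ENNReal.ofReal (|e x| + ∑ k ∈ Finset.range N, |F k ξ - g k ξ| * |φ' k x|) := by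
            apply ENNReal.ofReal_le_ofReal
            refine (abs_add_le _ _).trans (add_le_add_right ?_ _)
            simpa [abs_mul] using
              Finset.abs_sum_le_sum_abs (fun k => (F k ξ - g k ξ) * φ' k x) (Finset.range N)
        _ = _ := by
            rw [ENNReal.ofReal_add (abs_nonneg _)
                (Finset.sum_nonneg fun k _ => mul_nonneg (abs_nonneg _) (abs_nonneg _)),
              ENNReal.ofReal_sum_of_nonneg fun k _ => mul_nonneg (abs_nonneg _) (abs_nonneg _)]
            simp_rw [ENNReal.ofReal_mul (abs_nonneg _)]
    calc A ξ ≤ ∫⁻ x, (ENNReal.ofReal |e x| + ∑ k ∈ Finset.range N,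
          ENNReal.ofReal |F k ξ - g k ξ| * ENNReal.ofReal |φ' k x|) ∂μ := lintegral_mono hpt
      _ = (∫⁻ x, ENNReal.ofReal |e x| ∂μ) + ∑ k ∈ Finset.range N,
          ENNReal.ofReal |F k ξ - g k ξ| * ∫⁻ x, ENNReal.ofReal |φ' k x| ∂μ := by
          rw [lintegral_add_left hemeas.abs.ennreal_ofReal]
          congr 1
          rw [lintegral_finset_sum _ fun k _ =>
            (hφ'meas k).abs.ennreal_ofReal.const_mul _]
          exact Finset.sum_congr rfl fun k _ =>
            lintegral_const_mul _ (hφ'meas k).abs.ennreal_ofReal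
      _ ≤ U ξ ^ (1/2:ℝ) * M + ∑ k ∈ Finset.range N,
          ENNReal.ofReal |F k ξ - g k ξ| * M := by
          refine add_le_add ?_ (Finset.sum_le_sum fun k _ =>
            mul_le_mul_right (hφ'abs_lint k) _)
          calc ∫⁻ x, ENNReal.ofReal |e x| ∂μ
              ≤ (∫⁻ x, ENNReal.ofReal |e x| ^ (2:ℝ) ∂μ) ^ (1/2:ℝ) * M :=
                lint_CS μ _ hemeas.abs.ennreal_ofReal.aemeasurable
            _ = U ξ ^ (1/2:ℝ) * M := by
                simp_rw [sq_ofReal_abs]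
                rw [hlint_e2]
      _ = (U ξ ^ (1/2:ℝ) + ∑ k ∈ Finset.range N, ENNReal.ofReal |F k ξ - g k ξ|) * M := by
          rw [add_mul, Finset.sum_mul]
  -- per-mode bounds over π
  have hmode : ∀ k < N, ∫⁻ ξ, ENNReal.ofReal |F k ξ - g k ξ| ∂π ≤ ENNReal.ofReal (δ k) := by
    intro k hk
    have hFk2 : MemLp (F k) 2 π :=
      (memLp_two_iff_integrable_sq (hFmeas k).aestronglyMeasurable).2 (hFsq_int k)
    have hsub : Integrable (fun ξ => (F k ξ - g k ξ) ^ 2) π := by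
      have := (hFk2.sub (hg_L2 k)).integrable_sq
      simpa [Pi.sub_apply] using this
    have hmeasFg : AEMeasurable (fun ξ => ENNReal.ofReal |F k ξ - g k ξ|) π :=
      (continuous_abs.measurable.comp_aemeasurable
        ((hFmeas k).aemeasurable.sub (hg_L2 k).1.aemeasurable)).ennreal_ofReal
    calc ∫⁻ ξ, ENNReal.ofReal |F k ξ - g k ξ| ∂π
        ≤ (∫⁻ ξ, ENNReal.ofReal |F k ξ - g k ξ| ^ (2:ℝ) ∂π) ^ (1/2:ℝ) *
          (π Set.univ) ^ (1/2:ℝ) := lint_CS π _ hmeasFg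
      _ = ENNReal.ofReal (∫ ξ, (F k ξ - g k ξ) ^ 2 ∂π) ^ (1/2:ℝ) := by
          simp_rw [sq_ofReal_abs]
          rw [← ofReal_integral_eq_lintegral_ofReal hsub
            (Filter.Eventually.of_forall fun ξ => sq_nonneg _), measure_univ]
          simp
      _ ≤ ENNReal.ofReal (δ k ^ 2) ^ (1/2:ℝ) :=
          ENNReal.rpow_le_rpow (ENNReal.ofReal_le_ofReal (hbound k hk)) (by norm_num)
      _ = ENNReal.ofReal (δ k) := by
          rw [← sq_ofReal_abs (δ k), abs_of_nonneg (hδ k), ← ENNReal.rpow_mul]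
          norm_num
  -- total bound for the lintegral
  have hItot : ∫⁻ ξ, A ξ ∂π ≤
      (ENNReal.ofReal S ^ (1/2:ℝ) + ∑ k ∈ Finset.range N, ENNReal.ofReal (δ k)) * M := by
    have hmeas1 : Measurable fun ξ => U ξ ^ (1/2:ℝ) :=
      ENNReal.continuous_rpow_const.measurable.comp hUmeas
    have hmeask : ∀ k ∈ Finset.range N,
        AEMeasurable (fun ξ => ENNReal.ofReal |F k ξ - g k ξ|) π := fun k _ =>
      (continuous_abs.measurable.comp_aemeasurable
        ((hFmeas k).aemeasurable.sub (hg_L2 k).1.aemeasurable)).ennreal_ofReal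
    have hmeasadd : AEMeasurable (fun ξ => U ξ ^ (1/2:ℝ) +
        ∑ k ∈ Finset.range N, ENNReal.ofReal |F k ξ - g k ξ|) π :=
      hmeas1.aemeasurable.add (Finset.aemeasurable_fun_sum _ hmeask)
    calc ∫⁻ ξ, A ξ ∂π
        ≤ ∫⁻ ξ, (U ξ ^ (1/2:ℝ) +
            ∑ k ∈ Finset.range N, ENNReal.ofReal |F k ξ - g k ξ|) * M ∂π :=
          lintegral_mono_ae key
      _ = (∫⁻ ξ, U ξ ^ (1/2:ℝ) ∂π +
            ∑ k ∈ Finset.range N, ∫⁻ ξ, ENNReal.ofReal |F k ξ - g k ξ| ∂π) * M := by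
          rw [lintegral_mul_const'' _ hmeasadd, lintegral_add_left' hmeas1.aemeasurable,
            lintegral_finset_sum' _ hmeask]
      _ ≤ (ENNReal.ofReal S ^ (1/2:ℝ) + ∑ k ∈ Finset.range N, ENNReal.ofReal (δ k)) * M := by
          refine mul_le_mul_left (add_le_add ?_
            (Finset.sum_le_sum fun k hk => hmode k (Finset.mem_range.1 hk))) M
          calc ∫⁻ ξ, U ξ ^ (1/2:ℝ) ∂π
              ≤ (∫⁻ ξ, (U ξ ^ (1/2:ℝ)) ^ (2:ℝ) ∂π) ^ (1/2:ℝ) * (π Set.univ) ^ (1/2:ℝ) :=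
                lint_CS π _ hmeas1.aemeasurable
            _ = ENNReal.ofReal S ^ (1/2:ℝ) := by
                simp_rw [rpow_half_sq]
                rw [hUint, measure_univ]
                simp
  -- rewrite the LHS via `toReal` of the lintegral
  have hGν : ∀ ξ, ∫ x, |f x ξ - ∑ k ∈ Finset.range N, g k ξ * φ k x| ∂μ = (A ξ).toReal := by
    intro ξ
    have hmeasb : Measurable fun x => |f x ξ - ∑ k ∈ Finset.range N, g k ξ * φ' k x| :=
      ((hfx ξ).sub (Finset.measurable_sum _ fun k _ =>
        measurable_const.mul (hφ'meas k))).abs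
    have h1 : (∫ x, |f x ξ - ∑ k ∈ Finset.range N, g k ξ * φ k x| ∂μ) =
        ∫ x, |f x ξ - ∑ k ∈ Finset.range N, g k ξ * φ' k x| ∂μ := by
      refine integral_congr_ae (hsum_ae.mono fun x hx => ?_)
      have hs : (∑ k ∈ Finset.range N, g k ξ * φ k x) =
          ∑ k ∈ Finset.range N, g k ξ * φ' k x :=
        Finset.sum_congr rfl fun k hk => by rw [hx k hk]
      simp only [hs]
    rw [h1, integral_eq_lintegral_of_nonneg_ae
      (Filter.Eventually.of_forall fun x => abs_nonneg _) hmeasb.aestronglyMeasurable]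
  -- a measurable version of A
  set B : (Fin Np → ℝ) → ℝ≥0∞ := fun ξ =>
    ∫⁻ x, ENNReal.ofReal |f x ξ - ∑ k ∈ Finset.range N, g' k ξ * φ' k x| ∂μ with hBdef
  have hbody : Measurable fun q : (Fin Np → ℝ) × X =>
      ENNReal.ofReal |f q.2 q.1 - ∑ k ∈ Finset.range N, g' k q.1 * φ' k q.2| :=
    ((hfswap.sub (Finset.measurable_sum _ fun k _ =>
      ((hg'meas k).comp measurable_fst).mul ((hφ'meas k).comp measurable_snd))).abs).ennreal_ofReal
  have hBmeas : Measurable B := hbody.lintegral_prod_right'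
  have hg_all : ∀ᵐ ξ ∂π, ∀ k ∈ Finset.range N, g k ξ = g' k ξ :=
    Filter.eventually_all_finset (Finset.range N) |>.2 fun k _ => hg'ae k
  have hAB : A =ᵐ[π] B := by
    filter_upwards [hg_all] with ξ hξ
    refine lintegral_congr fun x => ?_
    have hs : (∑ k ∈ Finset.range N, g k ξ * φ' k x) =
        ∑ k ∈ Finset.range N, g' k ξ * φ' k x :=
      Finset.sum_congr rfl fun k hk => by rw [hξ k hk]
    simp only [hs]
  have hA_aesm : AEStronglyMeasurable (fun ξ => (A ξ).toReal) π :=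
    (hBmeas.ennreal_toReal.aestronglyMeasurable).congr
      (hAB.mono fun ξ h => congrArg ENNReal.toReal h.symm)
  have hLHS : ∫ ξ, (∫ x, |f x ξ - ∑ k ∈ Finset.range N, g k ξ * φ k x| ∂μ) ∂π
      = (∫⁻ ξ, ENNReal.ofReal ((A ξ).toReal) ∂π).toReal := by
    rw [integral_congr_ae (Filter.Eventually.of_forall hGν)]
    exact integral_eq_lintegral_of_nonneg_ae
      (Filter.Eventually.of_forall fun ξ => ENNReal.toReal_nonneg) hA_aesm
  rw [hLHS]
  have hRHS_nonneg : 0 ≤ Real.sqrt (μ Set.univ).toReal *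
      (Real.sqrt S + ∑ k ∈ Finset.range N, δ k) :=
    mul_nonneg (Real.sqrt_nonneg _)
      (add_nonneg (Real.sqrt_nonneg _) (Finset.sum_nonneg fun k _ => hδ k))
  refine ENNReal.toReal_le_of_le_ofReal hRHS_nonneg ?_
  calc ∫⁻ ξ, ENNReal.ofReal ((A ξ).toReal) ∂π
      ≤ ∫⁻ ξ, A ξ ∂π := lintegral_mono fun ξ => ENNReal.ofReal_toReal_le
    _ ≤ (ENNReal.ofReal S ^ (1/2:ℝ) + ∑ k ∈ Finset.range N, ENNReal.ofReal (δ k)) * M :=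
        hItot
    _ = ENNReal.ofReal (Real.sqrt (μ Set.univ).toReal *
        (Real.sqrt S + ∑ k ∈ Finset.range N, δ k)) := by
        rw [ENNReal.ofReal_mul (Real.sqrt_nonneg _),
          ENNReal.ofReal_add (Real.sqrt_nonneg _) (Finset.sum_nonneg fun k _ => hδ k),
          ENNReal.ofReal_sum_of_nonneg fun k _ => hδ k,
          Real.sqrt_eq_rpow, Real.sqrt_eq_rpow,
          ← ENNReal.ofReal_rpow_of_nonneg ENNReal.toReal_nonneg (by norm_num : (0:ℝ) ≤ 1/2),
          ← ENNReal.ofReal_rpow_of_nonneg hS (by norm_num : (0:ℝ) ≤ 1/2),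
          ENNReal.ofReal_toReal (measure_ne_top μ _), hM, mul_comm]
end

section
/- The KL modes are uncorrelated with variances given by the eigenvalues of the covariance operator: for all indices k and l, E[ F_k F_l ] = λ_k if k = l and E[ F_k F_l ] = 0 if k ≠ l, where F_k(ξ) = ∫_X ( f(x,ξ) − f̄(x) ) φ_k(x) dμ(x). In particular E[ F_k² ] = λ_k. -/
open MeasureTheory

section Aux

open Function ENNReal

private lemma aux_conj : Real.HolderConjugate 2 2 := Real.HolderConjugate.two_two

/-- Cauchy–Schwarz for lintegrals. -/
private lemma aux_CS {α : Type*} [MeasurableSpace α] (m : Measure α) {u v : α → ℝ≥0∞}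
    (hu : AEMeasurable u m) (hv : AEMeasurable v m) :
    ∫⁻ a, u a * v a ∂m ≤
      (∫⁻ a, u a ^ (2:ℝ) ∂m) ^ (1/2:ℝ) * (∫⁻ a, v a ^ (2:ℝ) ∂m) ^ (1/2:ℝ) :=
  ENNReal.lintegral_mul_le_Lp_mul_Lq m aux_conj hu hv

private lemma aux_sq_lt_top {α : Type*} [MeasurableSpace α] {m : Measure α} {u : α → ℝ}
    (hu : MemLp u 2 m) : ∫⁻ a, (‖u a‖₊ : ℝ≥0∞) ^ (2:ℝ) ∂m < ⊤ := by
  have h := hu.2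
  rw [eLpNorm_eq_lintegral_rpow_enorm_toReal two_ne_zero ENNReal.ofNat_ne_top] at h
  have h2 : (2 : ℝ≥0∞).toReal = (2:ℝ) := by simp
  rw [h2] at h
  by_contra hc
  push_neg at hc
  have hc' : ∫⁻ x, ‖u x‖ₑ ^ (2:ℝ) ∂m = ⊤ := top_le_iff.mp hc
  rw [hc'] at h
  simp [ENNReal.top_rpow_of_pos (by norm_num : (0:ℝ) < 1/2)] at h

private lemma aux_jensen {α : Type*} [MeasurableSpace α] (m : Measure α)
    [IsProbabilityMeasure m] {u : α → ℝ≥0∞} (hu : AEMeasurable u m) :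
    (∫⁻ a, u a ∂m) ^ (2:ℝ) ≤ ∫⁻ a, u a ^ (2:ℝ) ∂m := by
  have h := aux_CS m hu (aemeasurable_const (b := (1:ℝ≥0∞)))
  simp only [mul_one, ENNReal.one_rpow, lintegral_one, measure_univ, ENNReal.one_rpow] at h
  have h' : ∫⁻ a, u a ∂m ≤ (∫⁻ a, u a ^ (2:ℝ) ∂m) ^ (1/2:ℝ) := by
    simpa using h
  calc (∫⁻ a, u a ∂m) ^ (2:ℝ)
      ≤ ((∫⁻ a, u a ^ (2:ℝ) ∂m) ^ (1/2:ℝ)) ^ (2:ℝ) :=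
        ENNReal.rpow_le_rpow h' (by norm_num)
    _ = ∫⁻ a, u a ^ (2:ℝ) ∂m := by
        rw [← ENNReal.rpow_mul]; norm_num

private lemma aux_add_sq (a b : ℝ≥0∞) :
    (a + b) ^ (2:ℝ) ≤ 4 * a ^ (2:ℝ) + 4 * b ^ (2:ℝ) := by
  have h1 : a + b ≤ 2 * max a b := by
    rcases le_total a b with h | h
    · calc a + b ≤ b + b := add_le_add_left h b
        _ = 2 * b := (two_mul b).symm
        _ ≤ 2 * max a b := by gcongr; exact le_max_right _ _
    · calc a + b ≤ a + a := add_le_add_right h a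
        _ = 2 * a := (two_mul a).symm
        _ ≤ 2 * max a b := by gcongr; exact le_max_left _ _
  have h4 : ((2:ℝ≥0∞)) ^ (2:ℝ) = 4 := by
    rw [show (2:ℝ) = ((2:ℕ):ℝ) by norm_num, ENNReal.rpow_natCast]
    norm_num
  calc (a + b) ^ (2:ℝ) ≤ (2 * max a b) ^ (2:ℝ) := ENNReal.rpow_le_rpow h1 (by norm_num)
    _ = 4 * (max a b) ^ (2:ℝ) := by
        rw [ENNReal.mul_rpow_of_nonneg _ _ (by norm_num : (0:ℝ) ≤ 2), h4]
    _ ≤ 4 * (a ^ (2:ℝ) + b ^ (2:ℝ)) := by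
        gcongr
        rcases le_total a b with h | h
        · rw [max_eq_right h]; exact le_add_self
        · rw [max_eq_left h]; exact le_add_right le_rfl
    _ = 4 * a ^ (2:ℝ) + 4 * b ^ (2:ℝ) := by ring

end Aux

open Function ENNReal

/-- the KL modes are uncorrelated with variances given by the eigenvalues of
the covariance operator: `E[F_k F_l] = λ_k` if `k = l` and `0` otherwise. -/
theorem stmt_9
    {X : Type*} [MeasurableSpace X] (μ : Measure X) [IsFiniteMeasure μ]
    {Ω : Type*} [MeasurableSpace Ω] (π : Measure Ω) [IsProbabilityMeasure π]
    -- `f` jointly measurable and square-integrable w.r.t. `μ ⊗ π`: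
    (f : X → Ω → ℝ)
    (hf_meas : Measurable (Function.uncurry f))
    (hf_L2 : MemLp (Function.uncurry f) 2 (μ.prod π))
    -- mean field and covariance function:
    (fbar : X → ℝ) (hfbar : ∀ x, fbar x = ∫ ω, f x ω ∂π)
    (c : X → X → ℝ)
    (hc : ∀ x y, c x y = ∫ ω, (f x ω - fbar x) * (f y ω - fbar y) ∂π)
    -- orthonormal eigenfunctions of the covariance operator:
    {I : Type*} [DecidableEq I]
    (φ : I → X → ℝ) (lam : I → ℝ)
    (hφ_L2 : ∀ k, MemLp (φ k) 2 μ)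
    (hφ_ortho : ∀ k l, ∫ x, φ k x * φ l x ∂μ = if k = l then 1 else 0)
    (heig : ∀ k, ∀ᵐ x ∂μ, ∫ y, c x y * φ k y ∂μ = lam k * φ k x)
    -- KL modes `F_k(ω) = ∫_X (f(x,ω) − f̄(x)) φ_k(x) dμ(x)`:
    (F : I → Ω → ℝ)
    (hF : ∀ k ω, F k ω = ∫ x, (f x ω - fbar x) * φ k x ∂μ) :
    ∀ k l, ∫ ω, F k ω * F l ω ∂π = if k = l then lam k else 0 := by
  classical
  intro k l
  set g : X → Ω → ℝ := fun x ω => f x ω - fbar x with hgdef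
  -- measurability of the mean field and of `g`
  have hfbar_meas : Measurable fbar := by
    have h1 : StronglyMeasurable fun x => ∫ ω, f x ω ∂π :=
      hf_meas.stronglyMeasurable.integral_prod_right'
    have h2 : fbar = fun x => ∫ ω, f x ω ∂π := funext hfbar
    rw [h2]; exact h1.measurable
  have hg_meas : Measurable fun p : X × Ω => g p.1 p.2 :=
    hf_meas.sub (hfbar_meas.comp measurable_fst)
  -- square integrability of `f` on the product
  have hf_sq : ∫⁻ p : X × Ω, (‖f p.1 p.2‖₊ : ℝ≥0∞) ^ (2:ℝ) ∂(μ.prod π) < ⊤ :=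
    aux_sq_lt_top hf_L2
  have hfslice : ∀ x, Measurable (f x) := fun x => hf_meas.of_uncurry_left
  have hmF : Measurable fun p : X × Ω => (‖f p.1 p.2‖₊ : ℝ≥0∞) ^ (2:ℝ) :=
    hf_meas.enorm.pow_const _
  have hmFbar : Measurable fun p : X × Ω => (‖fbar p.1‖₊ : ℝ≥0∞) ^ (2:ℝ) :=
    (hfbar_meas.comp measurable_fst).enorm.pow_const _
  have hmG : Measurable fun p : X × Ω => (‖g p.1 p.2‖₊ : ℝ≥0∞) ^ (2:ℝ) :=
    hg_meas.enorm.pow_const _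
  -- pointwise Jensen estimate for `fbar`
  have hfbar_pt : ∀ x, (‖fbar x‖₊ : ℝ≥0∞) ^ (2:ℝ) ≤
      ∫⁻ ω, (‖f x ω‖₊ : ℝ≥0∞) ^ (2:ℝ) ∂π := by
    intro x
    have h1 : (‖fbar x‖₊ : ℝ≥0∞) ≤ ∫⁻ ω, (‖f x ω‖₊ : ℝ≥0∞) ∂π := by
      rw [hfbar x]; exact enorm_integral_le_lintegral_enorm _
    calc (‖fbar x‖₊ : ℝ≥0∞) ^ (2:ℝ)
        ≤ (∫⁻ ω, (‖f x ω‖₊ : ℝ≥0∞) ∂π) ^ (2:ℝ) := ENNReal.rpow_le_rpow h1 (by norm_num)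
      _ ≤ _ := aux_jensen π ((hfslice x).enorm.aemeasurable)
  have hfbar_sq : ∫⁻ x, (‖fbar x‖₊ : ℝ≥0∞) ^ (2:ℝ) ∂μ < ⊤ := by
    calc ∫⁻ x, (‖fbar x‖₊ : ℝ≥0∞) ^ (2:ℝ) ∂μ
        ≤ ∫⁻ x, ∫⁻ ω, (‖f x ω‖₊ : ℝ≥0∞) ^ (2:ℝ) ∂π ∂μ := lintegral_mono hfbar_pt
      _ = ∫⁻ p : X × Ω, (‖f p.1 p.2‖₊ : ℝ≥0∞) ^ (2:ℝ) ∂(μ.prod π) :=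
          (lintegral_prod _ hmF.aemeasurable).symm
      _ < ⊤ := hf_sq
  -- square integrability of `g` on the product
  have hg_sq : ∫⁻ p : X × Ω, (‖g p.1 p.2‖₊ : ℝ≥0∞) ^ (2:ℝ) ∂(μ.prod π) < ⊤ := by
    have hpt : ∀ p : X × Ω, (‖g p.1 p.2‖₊ : ℝ≥0∞) ^ (2:ℝ) ≤
        4 * (‖f p.1 p.2‖₊ : ℝ≥0∞) ^ (2:ℝ) + 4 * (‖fbar p.1‖₊ : ℝ≥0∞) ^ (2:ℝ) := by
      intro p
      refine le_trans ?_ (aux_add_sq _ _)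
      refine ENNReal.rpow_le_rpow ?_ (by norm_num)
      exact_mod_cast nnnorm_sub_le _ _
    have hfbar_prod : ∫⁻ p : X × Ω, (‖fbar p.1‖₊ : ℝ≥0∞) ^ (2:ℝ) ∂(μ.prod π)
        = ∫⁻ x, (‖fbar x‖₊ : ℝ≥0∞) ^ (2:ℝ) ∂μ := by
      rw [lintegral_prod _ hmFbar.aemeasurable]
      simp [lintegral_const, measure_univ]
    calc ∫⁻ p : X × Ω, (‖g p.1 p.2‖₊ : ℝ≥0∞) ^ (2:ℝ) ∂(μ.prod π)
        ≤ ∫⁻ p : X × Ω, (4 * (‖f p.1 p.2‖₊ : ℝ≥0∞) ^ (2:ℝ)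
            + 4 * (‖fbar p.1‖₊ : ℝ≥0∞) ^ (2:ℝ)) ∂(μ.prod π) := lintegral_mono hpt
      _ = 4 * ∫⁻ p : X × Ω, (‖f p.1 p.2‖₊ : ℝ≥0∞) ^ (2:ℝ) ∂(μ.prod π)
            + 4 * ∫⁻ p : X × Ω, (‖fbar p.1‖₊ : ℝ≥0∞) ^ (2:ℝ) ∂(μ.prod π) := by
          rw [lintegral_add_left (hmF.const_mul _),
            lintegral_const_mul' _ _ (by norm_num),
            lintegral_const_mul' _ _ (by norm_num)]
      _ < ⊤ := by
          rw [hfbar_prod]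
          exact ENNReal.add_lt_top.mpr
            ⟨ENNReal.mul_lt_top (by norm_num) hf_sq,
             ENNReal.mul_lt_top (by norm_num) hfbar_sq⟩
  -- the second-moment function of `g`
  set Sg : X → ℝ≥0∞ := fun x => ∫⁻ ω, (‖g x ω‖₊ : ℝ≥0∞) ^ (2:ℝ) ∂π with hSgdef
  have hSg_meas : Measurable Sg :=
    Measurable.lintegral_prod_right (f := fun x ω => (‖g x ω‖₊ : ℝ≥0∞) ^ (2:ℝ)) hmG
  have hSg_int : ∫⁻ x, Sg x ∂μ < ⊤ := by
    rw [hSgdef, ← lintegral_prod _ hmG.aemeasurable]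
    exact hg_sq
  have hφ_sq : ∀ j, ∫⁻ x, (‖φ j x‖₊ : ℝ≥0∞) ^ (2:ℝ) ∂μ < ⊤ := fun j => aux_sq_lt_top (hφ_L2 j)
  -- the big integrand
  set H : (X × X) × Ω → ℝ :=
    fun q => (g q.1.1 q.2 * φ k q.1.1) * (g q.1.2 q.2 * φ l q.1.2) with hHdef
  have qmp1 : Measure.QuasiMeasurePreserving (fun q : (X × X) × Ω => q.1.1)
      ((μ.prod μ).prod π) μ :=
    Measure.quasiMeasurePreserving_fst.comp Measure.quasiMeasurePreserving_fst
  have qmp2 : Measure.QuasiMeasurePreserving (fun q : (X × X) × Ω => q.1.2)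
      ((μ.prod μ).prod π) μ :=
    Measure.quasiMeasurePreserving_snd.comp Measure.quasiMeasurePreserving_fst
  have hg1_meas : Measurable fun q : (X × X) × Ω => g q.1.1 q.2 :=
    hg_meas.comp ((measurable_fst.fst).prodMk measurable_snd)
  have hg2_meas : Measurable fun q : (X × X) × Ω => g q.1.2 q.2 :=
    hg_meas.comp ((measurable_fst.snd).prodMk measurable_snd)
  have hφ1_aesm : AEStronglyMeasurable (fun q : (X × X) × Ω => φ k q.1.1)
      ((μ.prod μ).prod π) := (hφ_L2 k).1.comp_quasiMeasurePreserving qmp1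
  have hφ2_aesm : AEStronglyMeasurable (fun q : (X × X) × Ω => φ l q.1.2)
      ((μ.prod μ).prod π) := (hφ_L2 l).1.comp_quasiMeasurePreserving qmp2
  have hH_aesm : AEStronglyMeasurable H ((μ.prod μ).prod π) :=
    ((hg1_meas.aestronglyMeasurable.mul hφ1_aesm).mul
      (hg2_meas.aestronglyMeasurable.mul hφ2_aesm))
  -- finiteness of the integral of `H`
  have hH_fin : HasFiniteIntegral H ((μ.prod μ).prod π) := by
    rw [HasFiniteIntegral]
    have key : ∫⁻ q, (‖H q‖₊ : ℝ≥0∞) ∂((μ.prod μ).prod π)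
        = ∫⁻ p : X × X, ∫⁻ ω, (‖H (p, ω)‖₊ : ℝ≥0∞) ∂π ∂(μ.prod μ) :=
      lintegral_prod _ hH_aesm.enorm
    refine lt_of_eq_of_lt key ?_
    -- bound the inner integral
    have hin : ∀ p : X × X, ∫⁻ ω, (‖H (p, ω)‖₊ : ℝ≥0∞) ∂π ≤
        ((‖φ k p.1‖₊ : ℝ≥0∞) * Sg p.1 ^ (1/2:ℝ)) *
        ((‖φ l p.2‖₊ : ℝ≥0∞) * Sg p.2 ^ (1/2:ℝ)) := by
      intro p
      have hrw : ∀ ω, (‖H (p, ω)‖₊ : ℝ≥0∞)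
          = ((‖φ k p.1‖₊ : ℝ≥0∞) * (‖φ l p.2‖₊ : ℝ≥0∞)) *
            ((‖g p.1 ω‖₊ : ℝ≥0∞) * (‖g p.2 ω‖₊ : ℝ≥0∞)) := by
        intro ω
        simp only [hHdef, nnnorm_mul, ENNReal.coe_mul]
        ring
      calc ∫⁻ ω, (‖H (p, ω)‖₊ : ℝ≥0∞) ∂π
          = ((‖φ k p.1‖₊ : ℝ≥0∞) * (‖φ l p.2‖₊ : ℝ≥0∞)) *
            ∫⁻ ω, (‖g p.1 ω‖₊ : ℝ≥0∞) * (‖g p.2 ω‖₊ : ℝ≥0∞) ∂π := by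
            simp_rw [hrw]
            exact lintegral_const_mul' _ _ (by finiteness)
        _ ≤ ((‖φ k p.1‖₊ : ℝ≥0∞) * (‖φ l p.2‖₊ : ℝ≥0∞)) *
            (Sg p.1 ^ (1/2:ℝ) * Sg p.2 ^ (1/2:ℝ)) := by
            gcongr
            exact aux_CS π ((hfslice p.1).sub measurable_const).enorm.aemeasurable
              ((hfslice p.2).sub measurable_const).enorm.aemeasurable
        _ = _ := by ring
    calc ∫⁻ p : X × X, ∫⁻ ω, (‖H (p, ω)‖₊ : ℝ≥0∞) ∂π ∂(μ.prod μ)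
        ≤ ∫⁻ p : X × X, ((‖φ k p.1‖₊ : ℝ≥0∞) * Sg p.1 ^ (1/2:ℝ)) *
            ((‖φ l p.2‖₊ : ℝ≥0∞) * Sg p.2 ^ (1/2:ℝ)) ∂(μ.prod μ) := lintegral_mono hin
      _ = (∫⁻ x, (‖φ k x‖₊ : ℝ≥0∞) * Sg x ^ (1/2:ℝ) ∂μ) *
          (∫⁻ x, (‖φ l x‖₊ : ℝ≥0∞) * Sg x ^ (1/2:ℝ) ∂μ) :=
          lintegral_prod_mul
            ((hφ_L2 k).1.enorm.mul (hSg_meas.pow_const _).aemeasurable)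
            ((hφ_L2 l).1.enorm.mul (hSg_meas.pow_const _).aemeasurable)
      _ < ⊤ := by
          have hfac : ∀ j, ∫⁻ x, (‖φ j x‖₊ : ℝ≥0∞) * Sg x ^ (1/2:ℝ) ∂μ < ⊤ := by
            intro j
            have hCS := aux_CS μ (u := fun x => (‖φ j x‖₊ : ℝ≥0∞))
              (v := fun x => Sg x ^ (1/2:ℝ)) (hφ_L2 j).1.enorm
              (hSg_meas.pow_const _).aemeasurable
            have hsg2 : ∀ x, (Sg x ^ (1/2:ℝ)) ^ (2:ℝ) = Sg x := by
              intro x; rw [← ENNReal.rpow_mul]; norm_num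
            refine lt_of_le_of_lt hCS ?_
            simp_rw [hsg2]
            exact ENNReal.mul_lt_top
              (ENNReal.rpow_lt_top_of_nonneg (by norm_num) (hφ_sq j).ne)
              (ENNReal.rpow_lt_top_of_nonneg (by norm_num) hSg_int.ne)
          exact ENNReal.mul_lt_top (hfac k) (hfac l)
  have hH_int : Integrable H ((μ.prod μ).prod π) := ⟨hH_aesm, hH_fin⟩
  -- Fubini swap
  have swap : ∫ p : X × X, ∫ ω, H (p, ω) ∂π ∂(μ.prod μ)
      = ∫ ω, ∫ p : X × X, H (p, ω) ∂(μ.prod μ) ∂π :=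
    integral_integral_swap (f := fun p ω => H (p, ω)) hH_int
  -- inner product identity for each ω
  have hFeq : ∀ ω, ∫ p : X × X, H (p, ω) ∂(μ.prod μ) = F k ω * F l ω := by
    intro ω
    rw [hF, hF]
    exact integral_prod_mul (f := fun x => g x ω * φ k x) (g := fun y => g y ω * φ l y)
  -- covariance identity for each pair
  have hCeq : ∀ p : X × X, ∫ ω, H (p, ω) ∂π = φ k p.1 * (φ l p.2 * c p.1 p.2) := by
    intro p
    have hfun : (fun ω => H (p, ω)) = fun ω =>
        (φ k p.1 * φ l p.2) * ((f p.1 ω - fbar p.1) * (f p.2 ω - fbar p.2)) := by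
      funext ω; simp only [hHdef, hgdef]; ring
    rw [hfun, integral_const_mul, ← hc]
    ring
  -- assemble
  have step1 : ∫ ω, F k ω * F l ω ∂π
      = ∫ p : X × X, (∫ ω, H (p, ω) ∂π) ∂(μ.prod μ) := by
    calc ∫ ω, F k ω * F l ω ∂π
        = ∫ ω, ∫ p : X × X, H (p, ω) ∂(μ.prod μ) ∂π :=
          integral_congr_ae (Filter.Eventually.of_forall fun ω => (hFeq ω).symm)
      _ = _ := swap.symm
  have step2 : ∫ p : X × X, (∫ ω, H (p, ω) ∂π) ∂(μ.prod μ)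
      = ∫ x, ∫ y, φ k x * (φ l y * c x y) ∂μ ∂μ := by
    rw [integral_prod _ hH_int.integral_prod_left]
    refine integral_congr_ae (Filter.Eventually.of_forall fun x => ?_)
    exact integral_congr_ae (Filter.Eventually.of_forall fun y => hCeq (x, y))
  have step3 : ∀ᵐ x ∂μ, ∫ y, φ k x * (φ l y * c x y) ∂μ = φ k x * (lam l * φ l x) := by
    filter_upwards [heig l] with x hx
    rw [integral_const_mul]
    congr 1
    rw [← hx]
    exact integral_congr_ae (Filter.Eventually.of_forall fun y => mul_comm _ _)
  have step4 : ∫ x, φ k x * (lam l * φ l x) ∂μ = lam l * (if k = l then 1 else 0) := by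
    rw [← hφ_ortho k l, ← integral_const_mul]
    exact integral_congr_ae (Filter.Eventually.of_forall fun x => by ring)
  rw [step1, step2, integral_congr_ae step3, step4]
  by_cases h : k = l
  · subst h; simp
  · simp [h]
end
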